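/- For any symmetric q×q real matrix Δ and any positive integer s, if |vᵀΔv| ≤ δ for every unit vector v ∈ ℝ^q with at most 2s nonzero coordinates, then for every v ∈ ℝ^q one has |vᵀΔv| ≤ 27δ(‖v‖₂² + (1/s)‖v‖₁²). -/

import Mathlib

open Finset Matrix

namespace SparseQFE

variable {q : ℕ}

noncomputable def N1 (y : Fin q → ℝ) : ℝ := ∑ i, |y i|
noncomputable def N2 (y : Fin q → ℝ) : ℝ := Real.sqrt (∑ i, y i ^ 2)
noncomputable def supp (y : Fin q → ℝ) : Finset (Fin q) := Finset.univ.filter (fun i => y i ≠ 0)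

lemma N1_nonneg (y : Fin q → ℝ) : 0 ≤ N1 y := Finset.sum_nonneg fun i _ => abs_nonneg _
lemma sumsq_nonneg (y : Fin q → ℝ) : 0 ≤ ∑ i, y i ^ 2 := Finset.sum_nonneg fun i _ => sq_nonneg _
lemma N2_nonneg (y : Fin q → ℝ) : 0 ≤ N2 y := Real.sqrt_nonneg _
lemma sq_N2 (y : Fin q → ℝ) : N2 y ^ 2 = ∑ i, y i ^ 2 := Real.sq_sqrt (sumsq_nonneg y)

lemma sqrt_mul_le (a b : ℝ) (ha : 0 ≤ a) (hb : 0 ≤ b) : Real.sqrt (a*b) ≤ (a+b)/2 := by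
  rw [show (a+b)/2 = Real.sqrt (((a+b)/2)^2) from (Real.sqrt_sq (by positivity)).symm]
  exact Real.sqrt_le_sqrt (by nlinarith [sq_nonneg (a-b)])

variable (Δ : Matrix (Fin q) (Fin q) ℝ) {s : ℕ} {δ : ℝ}

lemma Qsym (hΔ : Δ.IsSymm) (x y : Fin q → ℝ) :
    x ⬝ᵥ Δ.mulVec y = y ⬝ᵥ Δ.mulVec x := by
  simp only [dotProduct, Matrix.mulVec, Finset.mul_sum]
  rw [Finset.sum_comm]
  refine Finset.sum_congr rfl fun i _ => Finset.sum_congr rfl fun j _ => ?_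
  rw [hΔ.apply i j]; ring

lemma quad_sparse
    (H : ∀ v : Fin q → ℝ, (∑ i, v i ^ 2 = 1) → ((supp v).card ≤ 2 * s) → |v ⬝ᵥ Δ.mulVec v| ≤ δ)
    (hδ : 0 ≤ δ) (x : Fin q → ℝ) (hx : (supp x).card ≤ 2 * s) :
    |x ⬝ᵥ Δ.mulVec x| ≤ δ * ∑ i, x i ^ 2 := by
  rcases eq_or_lt_of_le (sumsq_nonneg x) with h0 | hpos
  · have hx0 : x = 0 := by
      funext i
      have := (Finset.sum_eq_zero_iff_of_nonneg (fun i _ => sq_nonneg (x i))).1 h0.symm i (by simp)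
      exact pow_eq_zero_iff (n := 2) (by norm_num) |>.1 this
    simp [hx0, ← h0]
  · set t2 := ∑ i, x i ^ 2 with ht2
    set t := Real.sqrt t2 with ht
    have htpos : 0 < t := Real.sqrt_pos.2 hpos
    set u : Fin q → ℝ := t⁻¹ • x with hu
    have hsum : ∑ i, u i ^ 2 = 1 := by
      simp only [hu, Pi.smul_apply, smul_eq_mul, mul_pow, ← Finset.mul_sum]
      rw [← ht2, ht, ← Real.sqrt_inv, Real.sq_sqrt (by positivity)]
      field_simp
    have hsupp : supp u ⊆ supp x := by
      intro i hi
      simp only [supp, Finset.mem_filter, Finset.mem_univ, true_and, hu, Pi.smul_apply,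
        smul_eq_mul] at hi ⊢
      exact fun h => hi (by simp [h])
    have hcard : (supp u).card ≤ 2 * s := le_trans (Finset.card_le_card hsupp) hx
    have hQ : u ⬝ᵥ Δ.mulVec u = t⁻¹ * (t⁻¹ * (x ⬝ᵥ Δ.mulVec x)) := by
      simp [hu, Matrix.mulVec_smul, smul_dotProduct, dotProduct_smul, smul_eq_mul]
    have hb := H u hsum hcard
    rw [hQ, abs_mul, abs_mul, abs_inv, abs_of_pos htpos] at hb
    have ht2t : t * t = t2 := Real.mul_self_sqrt (le_of_lt hpos)
    calc |x ⬝ᵥ Δ.mulVec x| = (t*t) * (t⁻¹ * (t⁻¹ * |x ⬝ᵥ Δ.mulVec x|)) := by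
          field_simp
      _ ≤ (t*t) * δ := mul_le_mul_of_nonneg_left hb (by positivity)
      _ = δ * t2 := by rw [ht2t]; ring

lemma supp_add_subset (x y : Fin q → ℝ) : supp (x + y) ⊆ supp x ∪ supp y := by
  intro i hi
  simp only [supp, Finset.mem_filter, Finset.mem_univ, true_and, Finset.mem_union,
    Pi.add_apply] at hi ⊢
  by_contra h
  push_neg at h
  obtain ⟨h1, h2⟩ := h
  exact hi (by rw [h1, h2, add_zero])

lemma supp_sub_subset (x y : Fin q → ℝ) : supp (x - y) ⊆ supp x ∪ supp y := by
  intro i hi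
  simp only [supp, Finset.mem_filter, Finset.mem_univ, true_and, Finset.mem_union,
    Pi.sub_apply] at hi ⊢
  by_contra h
  push_neg at h
  obtain ⟨h1, h2⟩ := h
  exact hi (by rw [h1, h2, sub_zero])

lemma cross_sparse (hΔ : Δ.IsSymm)
    (H : ∀ v : Fin q → ℝ, (∑ i, v i ^ 2 = 1) → ((supp v).card ≤ 2 * s) → |v ⬝ᵥ Δ.mulVec v| ≤ δ)
    (hδ : 0 ≤ δ) :
    ∀ x y : Fin q → ℝ, (supp x).card ≤ s → (supp y).card ≤ s →
      |x ⬝ᵥ Δ.mulVec y| ≤ δ * N2 x * N2 y := by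
  have half : ∀ x y : Fin q → ℝ, (supp x).card ≤ s → (supp y).card ≤ s →
      |x ⬝ᵥ Δ.mulVec y| ≤ δ * ((∑ i, x i ^ 2) + (∑ i, y i ^ 2)) / 2 := by
    intro x y hx hy
    have hpol : x ⬝ᵥ Δ.mulVec y
        = ((x+y) ⬝ᵥ Δ.mulVec (x+y) - (x-y) ⬝ᵥ Δ.mulVec (x-y)) / 4 := by
      have h := Qsym Δ hΔ y x
      simp only [Matrix.mulVec_add, Matrix.mulVec_sub, dotProduct_add, dotProduct_sub,
        add_dotProduct, sub_dotProduct]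
      linarith
    have hcadd : (supp (x+y)).card ≤ 2 * s := by
      calc (supp (x+y)).card ≤ (supp x ∪ supp y).card :=
            Finset.card_le_card (supp_add_subset x y)
        _ ≤ (supp x).card + (supp y).card := Finset.card_union_le _ _
        _ ≤ 2 * s := by omega
    have hcsub : (supp (x-y)).card ≤ 2 * s := by
      calc (supp (x-y)).card ≤ (supp x ∪ supp y).card :=
            Finset.card_le_card (supp_sub_subset x y)
        _ ≤ (supp x).card + (supp y).card := Finset.card_union_le _ _
        _ ≤ 2 * s := by omega
    have h1 := quad_sparse Δ H hδ (x+y) hcadd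
    have h2 := quad_sparse Δ H hδ (x-y) hcsub
    have e1 : ∑ i, (x+y) i ^ 2 = (∑ i, x i ^2) + 2 * (∑ i, x i * y i) + (∑ i, y i ^2) := by
      rw [show (∑ i, x i ^2) + 2 * (∑ i, x i * y i) + (∑ i, y i ^2)
          = ∑ i, (x i ^2 + 2*(x i * y i) + y i ^2) by
        rw [Finset.sum_add_distrib, Finset.sum_add_distrib, Finset.mul_sum]]
      refine Finset.sum_congr rfl fun i _ => ?_
      have h : (x + y) i = x i + y i := rfl
      rw [h]; ring
    have e2 : ∑ i, (x-y) i ^ 2 = (∑ i, x i ^2) - 2 * (∑ i, x i * y i) + (∑ i, y i ^2) := by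
      rw [show (∑ i, x i ^2) - 2 * (∑ i, x i * y i) + (∑ i, y i ^2)
          = ∑ i, (x i ^2 - 2*(x i * y i) + y i ^2) by
        rw [Finset.sum_add_distrib, Finset.sum_sub_distrib, Finset.mul_sum]]
      refine Finset.sum_congr rfl fun i _ => ?_
      have h : (x - y) i = x i - y i := rfl
      rw [h]; ring
    rw [hpol]
    rw [abs_div, abs_of_nonneg (by norm_num : (0:ℝ) ≤ 4)]
    have := abs_sub (((x+y) ⬝ᵥ Δ.mulVec (x+y))) (((x-y) ⬝ᵥ Δ.mulVec (x-y)))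
    have habs : |(x+y) ⬝ᵥ Δ.mulVec (x+y) - (x-y) ⬝ᵥ Δ.mulVec (x-y)|
        ≤ |(x+y) ⬝ᵥ Δ.mulVec (x+y)| + |(x-y) ⬝ᵥ Δ.mulVec (x-y)| := abs_sub _ _
    rw [e1] at h1; rw [e2] at h2
    have hA := sumsq_nonneg x
    have hB := sumsq_nonneg y
    nlinarith [habs]
  intro x y hx hy
  rcases eq_or_lt_of_le (sumsq_nonneg x) with h0 | hposx
  · have hx0 : x = 0 := by
      funext i
      have := (Finset.sum_eq_zero_iff_of_nonneg (fun i _ => sq_nonneg (x i))).1 h0.symm i (by simp)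
      exact pow_eq_zero_iff (n := 2) (by norm_num) |>.1 this
    have : N2 x = 0 := by simp [N2, hx0]
    simp [hx0, this, N2_nonneg, mul_nonneg, hδ]
  rcases eq_or_lt_of_le (sumsq_nonneg y) with h0 | hposy
  · have hy0 : y = 0 := by
      funext i
      have := (Finset.sum_eq_zero_iff_of_nonneg (fun i _ => sq_nonneg (y i))).1 h0.symm i (by simp)
      exact pow_eq_zero_iff (n := 2) (by norm_num) |>.1 this
    have : N2 y = 0 := by simp [N2, hy0]
    simp [hy0, this, N2_nonneg, mul_nonneg, hδ]
  set a := N2 x with ha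
  set b := N2 y with hb
  have hapos : 0 < a := Real.sqrt_pos.2 hposx
  have hbpos : 0 < b := Real.sqrt_pos.2 hposy
  set r : ℝ := Real.sqrt (b / a) with hr
  have hrpos : 0 < r := Real.sqrt_pos.2 (by positivity)
  set r' : ℝ := Real.sqrt (a / b) with hr'
  have hr'pos : 0 < r' := Real.sqrt_pos.2 (by positivity)
  have hrr' : r * r' = 1 := by
    rw [hr, hr', ← Real.sqrt_mul (by positivity)]
    rw [show b / a * (a / b) = 1 by field_simp]
    exact Real.sqrt_one
  have hsx : supp (r • x) ⊆ supp x := by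
    intro i hi
    simp only [supp, Finset.mem_filter, Finset.mem_univ, true_and, Pi.smul_apply,
      smul_eq_mul] at hi ⊢
    exact fun h => hi (by simp [h])
  have hsy : supp (r' • y) ⊆ supp y := by
    intro i hi
    simp only [supp, Finset.mem_filter, Finset.mem_univ, true_and, Pi.smul_apply,
      smul_eq_mul] at hi ⊢
    exact fun h => hi (by simp [h])
  have hhalf := half (r • x) (r' • y) (le_trans (Finset.card_le_card hsx) hx)
    (le_trans (Finset.card_le_card hsy) hy)
  have hQ : (r • x) ⬝ᵥ Δ.mulVec (r' • y) = x ⬝ᵥ Δ.mulVec y := by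
    have h1 : r' * r = 1 := by rw [mul_comm]; exact hrr'
    simp only [Matrix.mulVec_smul, smul_dotProduct, dotProduct_smul, smul_eq_mul,
      ← mul_assoc, h1, one_mul]
  have hsum_x : ∑ i, (r • x) i ^ 2 = (b/a) * ∑ i, x i ^ 2 := by
    simp only [Pi.smul_apply, smul_eq_mul, mul_pow, ← Finset.mul_sum]
    rw [hr, Real.sq_sqrt (by positivity)]
  have hsum_y : ∑ i, (r' • y) i ^ 2 = (a/b) * ∑ i, y i ^ 2 := by
    simp only [Pi.smul_apply, smul_eq_mul, mul_pow, ← Finset.mul_sum]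
    rw [hr', Real.sq_sqrt (by positivity)]
  have hax : ∑ i, x i ^ 2 = a ^ 2 := (sq_N2 x).symm
  have hby : ∑ i, y i ^ 2 = b ^ 2 := (sq_N2 y).symm
  rw [hQ, hsum_x, hsum_y, hax, hby] at hhalf
  calc |x ⬝ᵥ Δ.mulVec y| ≤ δ * (b / a * a ^ 2 + a / b * b ^ 2) / 2 := hhalf
    _ = δ * a * b := by field_simp; ring

lemma exists_top (y : Fin q → ℝ) (hsq : s ≤ q) :
    ∃ A : Finset (Fin q), A.card = s ∧ ∀ i ∈ A, ∀ j, j ∉ A → |y j| ≤ |y i| := by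
  have hne : ((Finset.univ : Finset (Fin q)).powersetCard s).Nonempty := by
    obtain ⟨t, ht, hc⟩ := Finset.exists_subset_card_eq
      (show s ≤ (Finset.univ : Finset (Fin q)).card by simpa using hsq)
    exact ⟨t, Finset.mem_powersetCard.mpr ⟨ht, hc⟩⟩
  obtain ⟨A, hA, hmax⟩ := Finset.exists_max_image _ (fun B => ∑ i ∈ B, |y i|) hne
  have hAcard : A.card = s := (Finset.mem_powersetCard.1 hA).2
  refine ⟨A, hAcard, ?_⟩
  intro i hi j hj
  by_contra hlt
  push_neg at hlt
  have hjA : j ∉ A.erase i := fun h => hj (Finset.mem_of_mem_erase h)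
  have hcard' : (insert j (A.erase i)).card = s := by
    rw [Finset.card_insert_of_notMem hjA, Finset.card_erase_of_mem hi, hAcard]
    have : 1 ≤ s := hAcard ▸ Finset.card_pos.2 ⟨i, hi⟩
    omega
  have hsum' : ∑ k ∈ insert j (A.erase i), |y k| = |y j| + ∑ k ∈ A.erase i, |y k| :=
    Finset.sum_insert hjA
  have hsum : ∑ k ∈ A, |y k| = |y i| + ∑ k ∈ A.erase i, |y k| :=
    (Finset.add_sum_erase _ _ hi).symm
  have hle := hmax (insert j (A.erase i))
    (Finset.mem_powersetCard.mpr ⟨Finset.subset_univ _, hcard'⟩)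
  rw [hsum'] at hle
  rw [hsum] at hle
  linarith

lemma peel (hs : 0 < s) (y : Fin q → ℝ) (hy : s < (supp y).card) :
    ∃ y₁ y₂ : Fin q → ℝ, y = y₁ + y₂ ∧ (supp y₁).card ≤ s ∧
      (supp y₂).card < (supp y).card ∧ N1 y = N1 y₁ + N1 y₂ ∧
      (∀ i, |y₂ i| ≤ N1 y₁ / s) ∧ (∀ i, |y₁ i| ≤ |y i|) ∧ (∀ i, |y₂ i| ≤ |y i|) := by
  have hsq : s ≤ q := by
    have h1 : (supp y).card ≤ q := by
      simpa using Finset.card_le_univ (supp y)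
    omega
  obtain ⟨A, hAcard, htop⟩ := exists_top y hsq
  set y₁ : Fin q → ℝ := fun i => if i ∈ A then y i else 0 with hy₁
  set y₂ : Fin q → ℝ := fun i => if i ∈ A then 0 else y i with hy₂
  have hsplit : y = y₁ + y₂ := by
    funext i
    by_cases h : i ∈ A <;> simp [hy₁, hy₂, h]
  have hsupp1 : supp y₁ ⊆ A := by
    intro i hi
    simp only [supp, Finset.mem_filter, Finset.mem_univ, true_and, hy₁] at hi
    by_contra h
    exact hi (by simp [h])
  have hcard1 : (supp y₁).card ≤ s := hAcard ▸ Finset.card_le_card hsupp1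
  have hN1A : N1 y₁ = ∑ i ∈ A, |y i| := by
    rw [N1, show (∑ i : Fin q, |y₁ i|) = ∑ i : Fin q, (if i ∈ A then |y i| else 0) from
      Finset.sum_congr rfl fun i _ => by by_cases h : i ∈ A <;> simp [hy₁, h]]
    rw [Finset.sum_ite_mem, Finset.univ_inter]
  have hN1split : N1 y = N1 y₁ + N1 y₂ := by
    rw [N1, N1, N1, ← Finset.sum_add_distrib]
    refine Finset.sum_congr rfl fun i _ => ?_
    by_cases h : i ∈ A <;> simp [hy₁, hy₂, h]
  have hN1pos : 0 ≤ N1 y₁ := N1_nonneg y₁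
  have hbound : ∀ i, |y₂ i| ≤ N1 y₁ / s := by
    intro i
    by_cases h : i ∈ A
    · simp only [hy₂, h, if_true, abs_zero]
      positivity
    · simp only [hy₂, h, if_false]
      rw [le_div_iff₀ (by exact_mod_cast hs : (0:ℝ) < (s:ℝ))]
      calc |y i| * s = ∑ _k ∈ A, |y i| := by
            rw [Finset.sum_const, hAcard, nsmul_eq_mul, mul_comm]
        _ ≤ ∑ k ∈ A, |y k| := Finset.sum_le_sum fun k hk => htop k hk i h
        _ = N1 y₁ := hN1A.symm
  have hpt1 : ∀ i, |y₁ i| ≤ |y i| := by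
    intro i; by_cases h : i ∈ A <;> simp [hy₁, h]
  have hpt2 : ∀ i, |y₂ i| ≤ |y i| := by
    intro i; by_cases h : i ∈ A <;> simp [hy₂, h]
  -- supp y₂ strictly smaller
  have hAne : A.Nonempty := Finset.card_pos.1 (by omega)
  have hwit : ∃ i₀ ∈ A, y i₀ ≠ 0 := by
    by_contra h
    push_neg at h
    obtain ⟨i₀, hi₀⟩ := hAne
    have hall : ∀ j, y j = 0 := by
      intro j
      by_cases hj : j ∈ A
      · exact h j hj
      · have := htop i₀ hi₀ j hj
        rw [h i₀ hi₀, abs_zero] at this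
        exact abs_eq_zero.1 (le_antisymm this (abs_nonneg _))
    have : supp y = ∅ := by
      rw [supp, Finset.filter_eq_empty_iff]
      intro j _
      simp [hall j]
    rw [this] at hy
    simp at hy
  obtain ⟨i₀, hi₀A, hi₀ne⟩ := hwit
  have hsub2 : supp y₂ ⊆ supp y := by
    intro i hi
    simp only [supp, Finset.mem_filter, Finset.mem_univ, true_and, hy₂] at hi ⊢
    by_cases h : i ∈ A
    · simp [h] at hi
    · simpa [h] using hi
  have hi₀supp : i₀ ∈ supp y := by simp [supp, hi₀ne]
  have hi₀not : i₀ ∉ supp y₂ := by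
    simp [supp, hy₂, hi₀A]
  have hcard2 : (supp y₂).card < (supp y).card :=
    Finset.card_lt_card ⟨hsub2, fun hsub => hi₀not (hsub hi₀supp)⟩
  exact ⟨y₁, y₂, hsplit, hcard1, hcard2, hN1split, hbound, hpt1, hpt2⟩

lemma lemA (hΔ : Δ.IsSymm) (hs : 0 < s) (hδ : 0 ≤ δ)
    (H : ∀ v : Fin q → ℝ, (∑ i, v i ^ 2 = 1) → ((supp v).card ≤ 2 * s) → |v ⬝ᵥ Δ.mulVec v| ≤ δ) :
    ∀ n (x y : Fin q → ℝ) (c : ℝ), (supp y).card = n → (supp x).card ≤ s → 0 ≤ c →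
      (∀ i, |y i| ≤ c / Real.sqrt s) →
      |x ⬝ᵥ Δ.mulVec y| ≤ δ * N2 x * (c + 2 * N1 y / Real.sqrt s) := by
  have rs_pos : (0:ℝ) < Real.sqrt s := Real.sqrt_pos.2 (by exact_mod_cast hs)
  have rs_sq : Real.sqrt s * Real.sqrt s = (s:ℝ) := Real.mul_self_sqrt (by positivity)
  intro n
  induction n using Nat.strong_induction_on with
  | _ n IH =>
    intro x y c hn hx hc hyc
    by_cases hcase : (supp y).card ≤ s
    · have hcross := cross_sparse Δ hΔ H hδ x y hx hcase
      have hsq : ∑ i, y i ^ 2 ≤ (c / Real.sqrt s) * N1 y := by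
        rw [N1, Finset.mul_sum]
        refine Finset.sum_le_sum fun i _ => ?_
        calc y i ^2 = |y i| * |y i| := by rw [abs_mul_abs_self]; ring
          _ ≤ _ := mul_le_mul_of_nonneg_right (hyc i) (abs_nonneg _)
      have hN2y : N2 y ≤ (c + N1 y / Real.sqrt s) / 2 := by
        rw [N2]
        calc Real.sqrt (∑ i, y i ^2) ≤ Real.sqrt (c * (N1 y / Real.sqrt s)) := by
              apply Real.sqrt_le_sqrt
              rw [show c * (N1 y / Real.sqrt s) = (c / Real.sqrt s) * N1 y by ring]
              exact hsq
          _ ≤ (c + N1 y / Real.sqrt s) / 2 :=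
              sqrt_mul_le _ _ hc (div_nonneg (N1_nonneg y) (le_of_lt rs_pos))
      have hδx : 0 ≤ δ * N2 x := mul_nonneg hδ (N2_nonneg x)
      have h1 : 0 ≤ N1 y / Real.sqrt s := div_nonneg (N1_nonneg y) (le_of_lt rs_pos)
      calc |x ⬝ᵥ Δ.mulVec y| ≤ δ * N2 x * N2 y := hcross
        _ ≤ δ * N2 x * ((c + N1 y / Real.sqrt s)/2) := mul_le_mul_of_nonneg_left hN2y hδx
        _ ≤ δ * N2 x * (c + 2 * N1 y / Real.sqrt s) := by
            apply mul_le_mul_of_nonneg_left _ hδx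
            rw [mul_div_assoc]
            linarith
    · push_neg at hcase
      obtain ⟨y₁, y₂, hsplit, hc1, hc2, hN1s, hbd, hpt1, hpt2⟩ := peel hs y hcase
      set a := N1 y₁ / Real.sqrt s with hadef
      set b := N1 y₂ / Real.sqrt s with hbdef
      have ha : 0 ≤ a := div_nonneg (N1_nonneg y₁) (le_of_lt rs_pos)
      have hb : 0 ≤ b := div_nonneg (N1_nonneg y₂) (le_of_lt rs_pos)
      have hδx : 0 ≤ δ * N2 x := mul_nonneg hδ (N2_nonneg x)
      have hcross := cross_sparse Δ hΔ H hδ x y₁ hx hc1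
      have hy1c : ∀ i, |y₁ i| ≤ c / Real.sqrt s := fun i => le_trans (hpt1 i) (hyc i)
      have hsq1 : ∑ i, y₁ i ^2 ≤ c * a := by
        calc ∑ i, y₁ i ^2 ≤ ∑ i, (c / Real.sqrt s) * |y₁ i| := by
              refine Finset.sum_le_sum fun i _ => ?_
              calc y₁ i ^2 = |y₁ i| * |y₁ i| := by rw [abs_mul_abs_self]; ring
                _ ≤ _ := mul_le_mul_of_nonneg_right (hy1c i) (abs_nonneg _)
          _ = (c / Real.sqrt s) * N1 y₁ := by rw [← Finset.mul_sum]; rfl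
          _ = c * a := by rw [hadef]; ring
      have hN2y1 : N2 y₁ ≤ (c + a)/2 := by
        calc N2 y₁ ≤ Real.sqrt (c*a) := Real.sqrt_le_sqrt hsq1
          _ ≤ (c+a)/2 := sqrt_mul_le _ _ hc ha
      have hy2bd : ∀ i, |y₂ i| ≤ a / Real.sqrt s := by
        intro i
        rw [hadef, div_div, rs_sq]
        exact hbd i
      have hIH := IH (supp y₂).card (hn ▸ hc2) x y₂ a rfl hx ha hy2bd
      have h2b : 2 * N1 y₂ / Real.sqrt s = 2 * b := by rw [mul_div_assoc, hbdef]
      rw [h2b] at hIH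
      have hQsplit : x ⬝ᵥ Δ.mulVec y = x ⬝ᵥ Δ.mulVec y₁ + x ⬝ᵥ Δ.mulVec y₂ := by
        rw [hsplit, Matrix.mulVec_add, dotProduct_add]
      have habs : |x ⬝ᵥ Δ.mulVec y| ≤ |x ⬝ᵥ Δ.mulVec y₁| + |x ⬝ᵥ Δ.mulVec y₂| := by
        rw [hQsplit]; exact abs_add_le _ _
      have h1 : |x ⬝ᵥ Δ.mulVec y₁| ≤ δ * N2 x * ((c+a)/2) :=
        le_trans hcross (mul_le_mul_of_nonneg_left hN2y1 hδx)
      have hN1y : 2 * N1 y / Real.sqrt s = 2*(a+b) := by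
        rw [mul_div_assoc, hN1s, hadef, hbdef, add_div]
      rw [hN1y]
      have hfin : δ * N2 x * ((c+a)/2) + δ * N2 x * (a + 2*b) ≤ δ * N2 x * (c + 2*(a+b)) := by
        nlinarith [mul_nonneg hδx (by linarith : (0:ℝ) ≤ (c+a)/2)]
      linarith

lemma lemB (hΔ : Δ.IsSymm) (hs : 0 < s) (hδ : 0 ≤ δ)
    (H : ∀ v : Fin q → ℝ, (∑ i, v i ^ 2 = 1) → ((supp v).card ≤ 2 * s) → |v ⬝ᵥ Δ.mulVec v| ≤ δ) :
    ∀ n (y : Fin q → ℝ) (c : ℝ), (supp y).card = n → 0 ≤ c →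
      (∀ i, |y i| ≤ c / Real.sqrt s) →
      |y ⬝ᵥ Δ.mulVec y| ≤ δ * (c + 2 * N1 y / Real.sqrt s)^2 := by
  have rs_pos : (0:ℝ) < Real.sqrt s := Real.sqrt_pos.2 (by exact_mod_cast hs)
  have rs_sq : Real.sqrt s * Real.sqrt s = (s:ℝ) := Real.mul_self_sqrt (by positivity)
  intro n
  induction n using Nat.strong_induction_on with
  | _ n IH =>
    intro y c hn hc hyc
    have hu : 0 ≤ N1 y / Real.sqrt s := div_nonneg (N1_nonneg y) (le_of_lt rs_pos)
    by_cases hcase : (supp y).card ≤ s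
    · have hq := quad_sparse Δ H hδ y (by omega)
      have hsq : ∑ i, y i ^ 2 ≤ c * (N1 y / Real.sqrt s) := by
        rw [show c * (N1 y / Real.sqrt s) = (c / Real.sqrt s) * N1 y by ring, N1,
          Finset.mul_sum]
        refine Finset.sum_le_sum fun i _ => ?_
        calc y i ^2 = |y i| * |y i| := by rw [abs_mul_abs_self]; ring
          _ ≤ _ := mul_le_mul_of_nonneg_right (hyc i) (abs_nonneg _)
      have key : c * (N1 y / Real.sqrt s) ≤ (c + 2 * N1 y / Real.sqrt s)^2 := by
        rw [mul_div_assoc]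
        nlinarith [hu, hc, sq_nonneg (c - 2*(N1 y / Real.sqrt s))]
      calc |y ⬝ᵥ Δ.mulVec y| ≤ δ * ∑ i, y i ^2 := hq
        _ ≤ δ * (c * (N1 y / Real.sqrt s)) := mul_le_mul_of_nonneg_left hsq hδ
        _ ≤ δ * (c + 2 * N1 y / Real.sqrt s)^2 := mul_le_mul_of_nonneg_left key hδ
    · push_neg at hcase
      obtain ⟨y₁, y₂, hsplit, hc1, hc2, hN1s, hbd, hpt1, hpt2⟩ := peel hs y hcase
      set a := N1 y₁ / Real.sqrt s with hadef
      set b := N1 y₂ / Real.sqrt s with hbdef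
      have ha : 0 ≤ a := div_nonneg (N1_nonneg y₁) (le_of_lt rs_pos)
      have hb : 0 ≤ b := div_nonneg (N1_nonneg y₂) (le_of_lt rs_pos)
      have hy1c : ∀ i, |y₁ i| ≤ c / Real.sqrt s := fun i => le_trans (hpt1 i) (hyc i)
      have hsq1 : ∑ i, y₁ i ^2 ≤ c * a := by
        calc ∑ i, y₁ i ^2 ≤ ∑ i, (c / Real.sqrt s) * |y₁ i| := by
              refine Finset.sum_le_sum fun i _ => ?_
              calc y₁ i ^2 = |y₁ i| * |y₁ i| := by rw [abs_mul_abs_self]; ring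
                _ ≤ _ := mul_le_mul_of_nonneg_right (hy1c i) (abs_nonneg _)
          _ = (c / Real.sqrt s) * N1 y₁ := by rw [← Finset.mul_sum]; rfl
          _ = c * a := by rw [hadef]; ring
      have hca : 0 ≤ c * a := mul_nonneg hc ha
      set r : ℝ := Real.sqrt (c*a) with hrdef
      have hr0 : 0 ≤ r := Real.sqrt_nonneg _
      have hrle : r ≤ (c+a)/2 := sqrt_mul_le _ _ hc ha
      have hN2y1 : N2 y₁ ≤ r := Real.sqrt_le_sqrt hsq1
      -- quad term on y₁
      have hq1 : |y₁ ⬝ᵥ Δ.mulVec y₁| ≤ δ * (c * a) :=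
        le_trans (quad_sparse Δ H hδ y₁ (by omega)) (mul_le_mul_of_nonneg_left hsq1 hδ)
      -- cross term via lemA
      have hy2bd : ∀ i, |y₂ i| ≤ a / Real.sqrt s := by
        intro i
        rw [hadef, div_div, rs_sq]
        exact hbd i
      have hcr0 := lemA Δ hΔ hs hδ H (supp y₂).card y₁ y₂ a rfl hc1 ha hy2bd
      have h2b : 2 * N1 y₂ / Real.sqrt s = 2 * b := by rw [mul_div_assoc, hbdef]
      rw [h2b] at hcr0
      have hcr : |y₁ ⬝ᵥ Δ.mulVec y₂| ≤ δ * r * (a + 2*b) := by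
        refine le_trans hcr0 ?_
        have h1 : δ * N2 y₁ ≤ δ * r := mul_le_mul_of_nonneg_left hN2y1 hδ
        exact mul_le_mul_of_nonneg_right h1 (by linarith)
      -- IH on y₂
      have hIH := IH (supp y₂).card (hn ▸ hc2) y₂ a rfl ha hy2bd
      rw [h2b] at hIH
      -- expansion
      have hexp : y ⬝ᵥ Δ.mulVec y =
          (y₁ ⬝ᵥ Δ.mulVec y₁ + y₁ ⬝ᵥ Δ.mulVec y₂) +
          (y₁ ⬝ᵥ Δ.mulVec y₂ + y₂ ⬝ᵥ Δ.mulVec y₂) := by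
        rw [hsplit, Matrix.mulVec_add, dotProduct_add, add_dotProduct, add_dotProduct,
          Qsym Δ hΔ y₂ y₁]
      have habs : |y ⬝ᵥ Δ.mulVec y| ≤
          |y₁ ⬝ᵥ Δ.mulVec y₁| + 2 * |y₁ ⬝ᵥ Δ.mulVec y₂| + |y₂ ⬝ᵥ Δ.mulVec y₂| := by
        rw [hexp]
        calc |_ + _| ≤ |y₁ ⬝ᵥ Δ.mulVec y₁ + y₁ ⬝ᵥ Δ.mulVec y₂|
              + |y₁ ⬝ᵥ Δ.mulVec y₂ + y₂ ⬝ᵥ Δ.mulVec y₂| := abs_add_le _ _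
          _ ≤ _ := by
              have h1 := abs_add_le (y₁ ⬝ᵥ Δ.mulVec y₁) (y₁ ⬝ᵥ Δ.mulVec y₂)
              have h2 := abs_add_le (y₁ ⬝ᵥ Δ.mulVec y₂) (y₂ ⬝ᵥ Δ.mulVec y₂)
              linarith
      have hN1y : 2 * N1 y / Real.sqrt s = 2*(a+b) := by
        rw [mul_div_assoc, hN1s, hadef, hbdef, add_div]
      rw [hN1y]
      have hu2 : (0:ℝ) ≤ a + 2*b := by linarith
      have hint : 2*(r*(a+2*b)) ≤ (c+a)*(a+2*b) := by
        have := mul_le_mul_of_nonneg_right hrle hu2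
        linarith
      have tpoly : c*a + 2*(r*(a+2*b)) + (a+2*b)^2 ≤ (c + 2*(a+b))^2 := by
        nlinarith [hint, mul_nonneg hc ha, mul_nonneg hc hb, mul_nonneg ha hb,
          sq_nonneg a, sq_nonneg c]
      have hkey : δ * (c*a) + 2*(δ * r * (a+2*b)) + δ * (a+2*b)^2 ≤ δ * (c + 2*(a+b))^2 := by
        calc δ * (c*a) + 2*(δ * r * (a+2*b)) + δ * (a+2*b)^2
            = δ * (c*a + 2*(r*(a+2*b)) + (a+2*b)^2) := by ring
          _ ≤ δ * (c + 2*(a+b))^2 := mul_le_mul_of_nonneg_left tpoly hδ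
      linarith

end SparseQFE

lemma tpoly_aux (m a b : ℝ) (hm : 0 ≤ m) (ha : 0 ≤ a) (hb : 0 ≤ b) :
    m^2 + 2*(m*(a+2*b)) + (a+2*b)^2 ≤ 27*(m^2 + (a+b)^2) := by
  nlinarith [sq_nonneg (m - (a+2*b)), mul_nonneg ha hb, sq_nonneg a, sq_nonneg b]

open SparseQFE in
/-- Extension lemma: if a symmetric matrix is controlled on `2s`-sparse unit vectors,
it is controlled on all vectors (Loh–Wainwright). -/
theorem sparse_quadratic_form_extension {q : ℕ} (Δ : Matrix (Fin q) (Fin q) ℝ)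
    (hΔ : Δ.IsSymm) (s : ℕ) (hs : 0 < s) (δ : ℝ)
    (hsparse : ∀ v : Fin q → ℝ, (∑ i, v i ^ 2 = 1) →
      ((Finset.univ.filter (fun i => v i ≠ 0)).card ≤ 2 * s) →
      |v ⬝ᵥ Δ.mulVec v| ≤ δ) :
    ∀ v : Fin q → ℝ,
      |v ⬝ᵥ Δ.mulVec v| ≤ 27 * δ * ((∑ i, v i ^ 2) + (1 / (s : ℝ)) * (∑ i, |v i|) ^ 2) := by
  intro v
  rcases Nat.eq_zero_or_pos q with hq | hq
  · subst hq
    simp [dotProduct]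
  have H : ∀ w : Fin q → ℝ, (∑ i, w i ^ 2 = 1) → ((supp w).card ≤ 2 * s) →
      |w ⬝ᵥ Δ.mulVec w| ≤ δ := fun w h1 h2 => hsparse w h1 h2
  have hδ : 0 ≤ δ := by
    set i0 : Fin q := ⟨0, hq⟩ with hi0
    set e : Fin q → ℝ := fun i => if i = i0 then 1 else 0 with he
    have h1 : ∑ i, e i ^ 2 = 1 := by
      rw [show (∑ i, e i ^ 2) = ∑ i, (if i = i0 then (1:ℝ) else 0) from
        Finset.sum_congr rfl fun i _ => by by_cases h : i = i0 <;> simp [he, h]]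
      simp
    have h2 : (supp e).card ≤ 2 * s := by
      have : supp e = {i0} := by
        ext i
        simp only [supp, Finset.mem_filter, Finset.mem_univ, true_and, Finset.mem_singleton, he]
        by_cases h : i = i0 <;> simp [h]
      rw [this, Finset.card_singleton]
      omega
    exact le_trans (abs_nonneg _) (H e h1 h2)
  have rs_pos : (0:ℝ) < Real.sqrt s := Real.sqrt_pos.2 (by exact_mod_cast hs)
  have rs_sq : Real.sqrt s * Real.sqrt s = (s:ℝ) := Real.mul_self_sqrt (by positivity)
  have hS2 : 0 ≤ ∑ i, v i ^ 2 := sumsq_nonneg v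
  have hL2 : 0 ≤ (1 / (s:ℝ)) * (∑ i, |v i|) ^ 2 := by positivity
  by_cases hcard : (supp v).card ≤ s
  · have h := quad_sparse Δ H hδ v (by omega)
    have t1 : 0 ≤ δ * ∑ i, v i ^ 2 := mul_nonneg hδ hS2
    have t2 : 0 ≤ δ * ((1 / (s:ℝ)) * (∑ i, |v i|) ^ 2) := mul_nonneg hδ hL2
    nlinarith [h, t1, t2]
  · push_neg at hcard
    obtain ⟨v₁, v₂, hsplit, hc1, hc2, hN1s, hbd, hpt1, hpt2⟩ := peel hs v hcard
    set a := N1 v₁ / Real.sqrt s with hadef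
    set b := N1 v₂ / Real.sqrt s with hbdef
    have ha : 0 ≤ a := div_nonneg (N1_nonneg v₁) (le_of_lt rs_pos)
    have hb : 0 ≤ b := div_nonneg (N1_nonneg v₂) (le_of_lt rs_pos)
    have hptsq : ∀ i, v₁ i ^ 2 ≤ v i ^ 2 := by
      intro i
      have h1 := hpt1 i
      have := abs_nonneg (v₁ i)
      nlinarith [sq_abs (v₁ i), sq_abs (v i)]
    have hsum1 : ∑ i, v₁ i ^ 2 ≤ ∑ i, v i ^ 2 := Finset.sum_le_sum fun i _ => hptsq i
    have hq1 : |v₁ ⬝ᵥ Δ.mulVec v₁| ≤ δ * ∑ i, v i ^ 2 :=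
      le_trans (quad_sparse Δ H hδ v₁ (by omega)) (mul_le_mul_of_nonneg_left hsum1 hδ)
    have hy2bd : ∀ i, |v₂ i| ≤ a / Real.sqrt s := by
      intro i
      rw [hadef, div_div, rs_sq]
      exact hbd i
    set m := N2 v with hmdef
    have hm0 : 0 ≤ m := N2_nonneg v
    have hm2 : m ^ 2 = ∑ i, v i ^ 2 := sq_N2 v
    have hN2v1 : N2 v₁ ≤ m := Real.sqrt_le_sqrt hsum1
    have hcr0 := lemA Δ hΔ hs hδ H (supp v₂).card v₁ v₂ a rfl hc1 ha hy2bd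
    have h2b : 2 * N1 v₂ / Real.sqrt s = 2 * b := by rw [mul_div_assoc, hbdef]
    rw [h2b] at hcr0
    have hcr : |v₁ ⬝ᵥ Δ.mulVec v₂| ≤ δ * m * (a + 2*b) := by
      refine le_trans hcr0 ?_
      have h1 : δ * N2 v₁ ≤ δ * m := mul_le_mul_of_nonneg_left hN2v1 hδ
      exact mul_le_mul_of_nonneg_right h1 (by linarith)
    have hq2 := lemB Δ hΔ hs hδ H (supp v₂).card v₂ a rfl ha hy2bd
    rw [h2b] at hq2
    have hexp : v ⬝ᵥ Δ.mulVec v =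
        (v₁ ⬝ᵥ Δ.mulVec v₁ + v₁ ⬝ᵥ Δ.mulVec v₂) +
        (v₁ ⬝ᵥ Δ.mulVec v₂ + v₂ ⬝ᵥ Δ.mulVec v₂) := by
      rw [hsplit, Matrix.mulVec_add, dotProduct_add, add_dotProduct, add_dotProduct,
        Qsym Δ hΔ v₂ v₁]
    have habs : |v ⬝ᵥ Δ.mulVec v| ≤
        |v₁ ⬝ᵥ Δ.mulVec v₁| + 2 * |v₁ ⬝ᵥ Δ.mulVec v₂| + |v₂ ⬝ᵥ Δ.mulVec v₂| := by
      rw [hexp]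
      calc |_ + _| ≤ |v₁ ⬝ᵥ Δ.mulVec v₁ + v₁ ⬝ᵥ Δ.mulVec v₂|
            + |v₁ ⬝ᵥ Δ.mulVec v₂ + v₂ ⬝ᵥ Δ.mulVec v₂| := abs_add_le _ _
        _ ≤ _ := by
            have h1 := abs_add_le (v₁ ⬝ᵥ Δ.mulVec v₁) (v₁ ⬝ᵥ Δ.mulVec v₂)
            have h2 := abs_add_le (v₁ ⬝ᵥ Δ.mulVec v₂) (v₂ ⬝ᵥ Δ.mulVec v₂)
            linarith
    have hab2 : (1 / (s:ℝ)) * (∑ i, |v i|) ^ 2 = (a + b) ^ 2 := by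
      rw [hadef, hbdef, ← add_div, ← hN1s, div_pow, N1]
      rw [show Real.sqrt s ^ 2 = (s:ℝ) by rw [sq]; exact rs_sq]
      ring
    rw [show (∑ i, v i ^ 2) = m ^ 2 from hm2.symm, hab2]
    have tpoly : m^2 + 2*(m*(a+2*b)) + (a+2*b)^2 ≤ 27*(m^2 + (a+b)^2) :=
      tpoly_aux m a b hm0 ha hb
    have hkey : δ * m^2 + 2*(δ*m*(a+2*b)) + δ*(a+2*b)^2 ≤ 27 * δ * (m^2 + (a+b)^2) := by
      calc δ * m^2 + 2*(δ*m*(a+2*b)) + δ*(a+2*b)^2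
          = δ * (m^2 + 2*(m*(a+2*b)) + (a+2*b)^2) := by ring
        _ ≤ δ * (27*(m^2 + (a+b)^2)) := mul_le_mul_of_nonneg_left tpoly hδ
        _ = 27 * δ * (m^2 + (a+b)^2) := by ring
    have hq1' : |v₁ ⬝ᵥ Δ.mulVec v₁| ≤ δ * m^2 := by rw [hm2]; exact hq1
    linarith
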